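/- Let G be a residually finite group acting freely and properly discontinuously on a topological space U, and let K ⊆ U be a compact subset. If (N_i) is a descending chain of finite-index normal subgroups of G with trivial intersection, then for all sufficiently large i the quotient map U → U/N_i is injective on K. -/

import Mathlib

theorem stmt_1 {G : Type*} [Group G] {U : Type*} [TopologicalSpace U] [T2Space U]
    [MulAction G U] [ContinuousConstSMul G U] [ProperlyDiscontinuousSMul G U]
    (hfree : ∀ (g : G) (x : U), g • x = x → g = 1)
    (K : Set U) (hK : IsCompact K)
    (N : ℕ → Subgroup G) (hnorm : ∀ i, (N i).Normal) (hfin : ∀ i, (N i).FiniteIndex)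
    (hdesc : Antitone N) (htriv : (⨅ i, N i) = ⊥) :
    ∃ i₀ : ℕ, ∀ i ≥ i₀, ∀ x ∈ K, ∀ y ∈ K, (∃ g ∈ N i, g • x = y) → x = y := by
  have hS : Set.Finite { γ : G | (γ • ·) '' K ∩ K ≠ ∅ } :=
    by simpa only [Set.nonempty_iff_ne_empty] using
      ProperlyDiscontinuousSMul.finite_disjoint_inter_image hK hK
  -- for each g ≠ 1, some index excludes it
  have hexc : ∀ g : G, g ≠ 1 → ∃ i, g ∉ N i := by
    intro g hg
    by_contra h
    push_neg at h
    exact hg (Subgroup.mem_bot.mp (htriv ▸ Subgroup.mem_iInf.mpr h))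
  classical
  let idx : G → ℕ := fun g => if h : g = 1 then 0 else Classical.choose (hexc g h)
  refine ⟨hS.toFinset.sup idx, ?_⟩
  intro i hi x hx y hy ⟨g, hgN, hgxy⟩
  by_cases hg1 : g = 1
  · simpa [hg1] using hgxy
  · exfalso
    have hgS : g ∈ hS.toFinset := by
      simp only [Set.Finite.mem_toFinset, Set.mem_setOf_eq]
      refine Set.nonempty_iff_ne_empty.mp ⟨y, ⟨x, hx, hgxy⟩, hy⟩
    have : idx g ≤ i := le_trans (Finset.le_sup hgS) hi
    have hnot : g ∉ N (idx g) := by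
      simpa [idx, hg1] using Classical.choose_spec (hexc g hg1)
    exact hnot (hdesc this hgN)
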